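/- Let Y ⊆ Y' be A-lattices in V and let 𝔭 be a maximal ideal of A such that the 𝔭-torsion of the finite A-module Y'/Y is trivial. Then the canonical map Y/𝔭Y → Y'/𝔭Y' is an isomorphism of r-dimensional A/𝔭-vector spaces, and for each i with 0 ≤ i < r the map Z ↦ Z + 𝔭Y' is a bijection from ℒ(Y,𝔭,i) onto ℒ(Y',𝔭,i), with inverse Z' ↦ Z' ∩ Y. -/

import Mathlib

open scoped Classical

set_option linter.unusedSectionVars false
set_option maxHeartbeats 1600000

noncomputable section

namespace Stmt1Aux

section Generic
variable {R : Type*} {M : Type*} [Ring R] [AddCommGroup M] [Module R M]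

def relCard (B C : Submodule R M) : ℕ := Nat.card (↥B ⧸ Submodule.comap B.subtype C)

theorem relCard_mul (D B C : Submodule R M) (hCB : C ≤ B) (hBD : B ≤ D) :
    relCard D C = relCard D B * relCard B C := by
  classical
  set C' := Submodule.comap D.subtype C with hC'
  set B' := Submodule.comap D.subtype B with hB'
  have hCB' : C' ≤ B' := fun x hx => hCB hx
  set f : ↥B →ₗ[R] (↥D ⧸ C') := C'.mkQ ∘ₗ Submodule.inclusion hBD with hf
  have hker : LinearMap.ker f = Submodule.comap B.subtype C := by
    ext x
    simp [hf, Submodule.Quotient.mk_eq_zero, hC']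
  have hrange : LinearMap.range f = Submodule.map C'.mkQ B' := by
    rw [hf, LinearMap.range_comp, Submodule.range_inclusion]
  have h1 : (Submodule.map C'.mkQ B').toAddSubgroup.index *
      Nat.card (Submodule.map C'.mkQ B') = Nat.card (↥D ⧸ C') :=
    AddSubgroup.index_mul_card _
  have h2 : (Submodule.map C'.mkQ B').toAddSubgroup.index
      = Nat.card ((↥D ⧸ C') ⧸ Submodule.map C'.mkQ B') :=
    AddSubgroup.index_eq_card _
  have h3 : Nat.card ((↥D ⧸ C') ⧸ Submodule.map C'.mkQ B') = Nat.card (↥D ⧸ B') :=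
    Nat.card_congr (Submodule.quotientQuotientEquivQuotient C' B' hCB').toEquiv
  have h4 : Nat.card (Submodule.map C'.mkQ B') = relCard B C := by
    rw [← hrange, relCard, ← hker]
    exact (Nat.card_congr f.quotKerEquivRange.toEquiv).symm
  rw [relCard, ← h1, h2, h3, h4]; rfl


theorem relCard_sup (Z W : Submodule R M) :
    relCard (Z ⊔ W) W = Nat.card (↥Z ⧸ Submodule.comap Z.subtype (Z ⊓ W)) :=
  (Nat.card_congr (LinearMap.quotientInfEquivSupQuotient Z W).toEquiv).symm

theorem le_of_relCard_eq_one {B C : Submodule R M} (h1 : relCard B C = 1) : B ≤ C := by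
  have hsub := (Nat.card_eq_one_iff_unique.mp h1).1
  intro x hx
  have : (Submodule.Quotient.mk (⟨x, hx⟩ : ↥B) :
      ↥B ⧸ Submodule.comap B.subtype C) = 0 := Subsingleton.elim _ _
  simpa using (Submodule.Quotient.mk_eq_zero _).mp this

theorem relCard_self (B : Submodule R M) : relCard B B = 1 := by
  have h : Submodule.comap B.subtype B = ⊤ := by ext x; simp [x.2]
  rw [relCard, h]
  have : Subsingleton (↥B ⧸ (⊤ : Submodule R ↥B)) :=
    (Submodule.Quotient.subsingleton_iff (p := ⊤)).mpr rfl
  exact Nat.card_unique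

theorem relCard_pos {B C : Submodule R M} [Finite (↥B ⧸ Submodule.comap B.subtype C)] :
    0 < relCard B C := Nat.card_pos


end Generic

variable {A : Type*} [CommRing A] [IsDomain A] [IsDedekindDomain A]
variable {K : Type*} [Field K] [Algebra A K] [IsFractionRing A K]
variable {r : ℕ}

theorem finite_quot (hfin : ∀ I : Ideal A, I ≠ ⊥ → Finite (A ⧸ I))
    (P N : Submodule A (Fin r → K)) (hP : P.FG)
    (c : A) (hc : c ≠ 0) (hcs : ∀ x ∈ P, c • x ∈ N) :
    Finite (↥P ⧸ Submodule.comap P.subtype N) := by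
  classical
  obtain ⟨s, hs⟩ := hP
  have hmem : ∀ t : ↥(s : Set (Fin r → K)), (t : Fin r → K) ∈ P := fun t =>
    hs ▸ Submodule.subset_span t.2
  set g : ↥(s : Set (Fin r → K)) → ↥P := fun t => ⟨t, hmem t⟩ with hg
  set θ : (↥(s : Set (Fin r → K)) → A) →ₗ[A] ↥P := Fintype.linearCombination A g with hθ
  set φ := (Submodule.comap P.subtype N).mkQ ∘ₗ θ with hφ
  have hθsurj : Function.Surjective θ := by
    rw [← LinearMap.range_eq_top, hθ, Fintype.range_linearCombination]
    apply Submodule.map_injective_of_injective P.injective_subtype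
    rw [Submodule.map_span, Submodule.map_top, Submodule.range_subtype,
      ← Set.range_comp]
    have : (P.subtype ∘ g) = fun t : ↥(s : Set (Fin r → K)) => (t : Fin r → K) := rfl
    rw [this, Subtype.range_coe, hs]
  have hφsurj : Function.Surjective φ :=
    (Submodule.mkQ_surjective _).comp hθsurj
  set π : Submodule A (↥(s : Set (Fin r → K)) → A) :=
    Submodule.pi Set.univ (fun _ => Ideal.span {c}) with hπdef
  have hπ : π ≤ LinearMap.ker φ := by
    intro x hx
    rw [LinearMap.mem_ker, hφ, LinearMap.comp_apply, Submodule.mkQ_apply,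
      Submodule.Quotient.mk_eq_zero, Submodule.mem_comap]
    have hcoe : (θ x : Fin r → K) = ∑ i, x i • (i : Fin r → K) := by
      rw [hθ, Fintype.linearCombination_apply]
      push_cast [hg]
      rfl
    rw [Submodule.subtype_apply, hcoe]
    refine Submodule.sum_mem _ fun i _ => ?_
    have hxi : x i ∈ Ideal.span {c} := hx i (Set.mem_univ i)
    obtain ⟨a, ha⟩ := Ideal.mem_span_singleton.mp hxi
    rw [ha, mul_comm, mul_smul]
    exact Submodule.smul_mem _ a (hcs _ (hmem i))
  set ψ := π.liftQ φ hπ with hψdef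
  have hψ : Function.Surjective ψ := by
    intro qq
    obtain ⟨x, hx⟩ := hφsurj qq
    exact ⟨Submodule.Quotient.mk x, hx⟩
  have hb : Ideal.span {c} ≠ ⊥ := by simpa [Ideal.span_singleton_eq_bot] using hc
  have := hfin _ hb
  have : Finite ((↥(s : Set (Fin r → K)) → A) ⧸ π) :=
    Finite.of_equiv _ (Submodule.quotientPi _).symm.toEquiv
  exact Finite.of_surjective ψ hψ


theorem exists_denom (Y : Submodule A (Fin r → K)) {x : Fin r → K}
    (hx : x ∈ Submodule.span K (Y : Set (Fin r → K))) :
    ∃ a : A, a ≠ 0 ∧ a • x ∈ Y := by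
  induction hx using Submodule.span_induction with
  | mem x hxY => exact ⟨1, one_ne_zero, by simpa using hxY⟩
  | zero => exact ⟨1, one_ne_zero, by simp⟩
  | add x y _ _ hx hy =>
      obtain ⟨a, ha, hax⟩ := hx
      obtain ⟨b, hb, hbx⟩ := hy
      refine ⟨a * b, mul_ne_zero ha hb, ?_⟩
      rw [smul_add]
      refine Submodule.add_mem _ ?_ ?_
      · rw [mul_comm, mul_smul]; exact Submodule.smul_mem _ b hax
      · rw [mul_smul]; exact Submodule.smul_mem _ a hbx
  | smul k x _ hx =>
      obtain ⟨a, ha, hax⟩ := hx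
      obtain ⟨⟨n, d⟩, hmk⟩ := IsLocalization.mk'_surjective (nonZeroDivisors A) k
      have hd0 : (d : A) ≠ 0 := nonZeroDivisors.coe_ne_zero d
      refine ⟨(d : A) * a, mul_ne_zero hd0 ha, ?_⟩
      have hdk : algebraMap A K (d : A) * k = algebraMap A K n := by
        rw [← hmk, mul_comm]
        exact IsLocalization.mk'_spec K n d
      have : ((d : A) * a) • k • x = (n * a) • x := by
        rw [← algebraMap_smul K ((d : A) * a), ← algebraMap_smul K (n * a),
          smul_smul, map_mul, map_mul, mul_comm (algebraMap A K (d : A)) (algebraMap A K a),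
          mul_assoc, hdk, mul_comm (algebraMap A K a) (algebraMap A K n)]
      rw [this, mul_smul]
      exact Submodule.smul_mem _ n hax

theorem exists_ann {Y Y' : Submodule A (Fin r → K)} (hfg : Y'.FG)
    (hsp : Submodule.span K (Y : Set (Fin r → K)) = ⊤) :
    ∃ a : A, a ≠ 0 ∧ ∀ y ∈ Y', a • y ∈ Y := by
  classical
  obtain ⟨s, hs⟩ := hfg
  have hden : ∀ t : ↥(s : Set (Fin r → K)), ∃ a : A, a ≠ 0 ∧ a • (t : Fin r → K) ∈ Y :=
    fun t => exists_denom Y (by rw [hsp]; trivial)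
  choose f hf1 hf2 using hden
  refine ⟨∏ t, f t, Finset.prod_ne_zero_iff.mpr (fun t _ => hf1 t), ?_⟩
  intro y hy
  rw [← hs] at hy
  induction hy using Submodule.span_induction with
  | mem x hxY =>
      have hx' : (∏ t, f t) • x = (∏ t ∈ Finset.univ.erase ⟨x, hxY⟩, f t) • (f ⟨x, hxY⟩ • x) := by
        rw [← mul_smul, Finset.prod_erase_mul _ _ (Finset.mem_univ _)]
      rw [hx']
      exact Submodule.smul_mem _ _ (hf2 ⟨x, hxY⟩)
  | zero => simp
  | add x y _ _ hx hy => rw [smul_add]; exact Submodule.add_mem _ hx hy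
  | smul a x _ hx => rw [smul_comm]; exact Submodule.smul_mem _ a hx

theorem fg_of_le {P Q : Submodule A (Fin r → K)} (hP : P.FG) (hQ : Q ≤ P) : Q.FG := by
  have : IsNoetherian A ↥P := isNoetherian_of_fg_of_noetherian P hP
  have h1 : (Submodule.comap P.subtype Q).FG := IsNoetherian.noetherian _
  have h2 : Submodule.map P.subtype (Submodule.comap P.subtype Q) = Q := by
    rw [Submodule.map_comap_subtype, inf_eq_right.mpr hQ]
  exact h2 ▸ h1.map _

theorem inv_trick {𝔭 : Ideal A} (h0 : 𝔭 ≠ ⊥) (W : Submodule A (Fin r → K))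
    {y : Fin r → K} (h : ∀ p ∈ 𝔭, p • y ∈ 𝔭 • W) : y ∈ W := by
  have h𝔭ne : (𝔭 : FractionalIdeal (nonZeroDivisors A) K) ≠ 0 :=
    FractionalIdeal.coeIdeal_ne_zero.mpr h0
  have hinv : ((𝔭 : FractionalIdeal (nonZeroDivisors A) K)⁻¹ *
      (𝔭 : FractionalIdeal (nonZeroDivisors A) K)) = 1 := by
    rw [mul_comm]; exact mul_inv_cancel₀ h𝔭ne
  have key : ∀ z ∈ (((𝔭 : FractionalIdeal (nonZeroDivisors A) K)⁻¹ : FractionalIdeal (nonZeroDivisors A) K) : Submodule A K) *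
      ((𝔭 : FractionalIdeal (nonZeroDivisors A) K) : Submodule A K), z • y ∈ W := by
    intro z hz
    refine Submodule.mul_induction_on hz ?_ ?_
    · intro m hm n hn
      obtain ⟨p, hp, rfl⟩ := (FractionalIdeal.mem_coeIdeal _).mp (FractionalIdeal.mem_coe.mp hn)
      have hmn : (m * algebraMap A K p) • y = m • (p • y) := by
        rw [mul_smul, algebraMap_smul]
      rw [hmn]
      refine Submodule.smul_induction_on (h p hp) ?_ ?_
      · intro a ha w hw
        have hmem1 : m * algebraMap A K a ∈ (1 : FractionalIdeal (nonZeroDivisors A) K) :=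
          (FractionalIdeal.mem_inv_iff h𝔭ne).mp (FractionalIdeal.mem_coe.mp hm) _
            (FractionalIdeal.mem_coeIdeal_of_mem _ ha)
        obtain ⟨b, hb⟩ := (FractionalIdeal.mem_one_iff _).mp hmem1
        have : m • (a • w) = b • w := by
          rw [← algebraMap_smul K a w, ← algebraMap_smul K b w, smul_smul, hb]
        rw [this]
        exact Submodule.smul_mem _ b hw
      · intro w1 w2 h1 h2; rw [smul_add]; exact Submodule.add_mem _ h1 h2
    · intro z1 z2 h1 h2; rw [add_smul]; exact Submodule.add_mem _ h1 h2
  have h1mem : (1 : K) ∈ (((𝔭 : FractionalIdeal (nonZeroDivisors A) K)⁻¹ : FractionalIdeal (nonZeroDivisors A) K) : Submodule A K) *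
      ((𝔭 : FractionalIdeal (nonZeroDivisors A) K) : Submodule A K) := by
    rw [← FractionalIdeal.coe_mul, hinv]
    exact FractionalIdeal.mem_coe.mpr ((FractionalIdeal.mem_one_iff _).mpr ⟨1, map_one _⟩)
  simpa using key 1 h1mem

theorem exists_pi {𝔭 : Ideal A} (h0 : 𝔭 ≠ ⊥) (hm : 𝔭.IsMaximal) :
    ∃ π ∈ 𝔭, 𝔭 ≤ 𝔭 ^ 2 ⊔ Ideal.span {π} := by
  have hne : 𝔭 ^ 2 ≠ 𝔭 := by
    intro hEq
    have : 𝔭 * 𝔭 = 𝔭 * 1 := by rw [mul_one, ← pow_two, hEq]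
    have h1 : 𝔭 = 1 := mul_left_cancel₀ h0 this
    exact hm.ne_top (by rw [← Ideal.one_eq_top, ← h1])
  have hlt : 𝔭 ^ 2 < 𝔭 := lt_of_le_of_ne (by rw [pow_two]; exact Ideal.mul_le_left) hne
  obtain ⟨π, hπ𝔭, hπ2⟩ := SetLike.exists_of_lt hlt
  refine ⟨π, hπ𝔭, ?_⟩
  set I := 𝔭 ^ 2 ⊔ Ideal.span {π} with hI
  have hIle : I ≤ 𝔭 := sup_le hlt.le (Ideal.span_le.mpr (by simpa using hπ𝔭))
  obtain ⟨D, hD⟩ := Ideal.dvd_iff_le.mpr hIle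
  have hI2 : I ∣ 𝔭 ^ 2 := Ideal.dvd_iff_le.mpr le_sup_left
  obtain ⟨E, hE⟩ := hI2
  have h𝔭prime : Prime 𝔭 := Ideal.prime_of_isPrime h0 hm.isPrime
  have hDE : 𝔭 = D * E := by
    have : 𝔭 * 𝔭 = 𝔭 * (D * E) := by
      rw [← mul_assoc, ← hD, ← hE, pow_two]
    exact mul_left_cancel₀ h0 this
  rcases h𝔭prime.irreducible.isUnit_or_isUnit hDE with hu | hu
  · have : D = ⊤ := Ideal.isUnit_iff.mp hu
    rw [hD, this, ← Ideal.one_eq_top, mul_one]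
  · have hE1 : E = ⊤ := Ideal.isUnit_iff.mp hu
    have h𝔭D : 𝔭 = D := by rw [hDE, hE1, ← Ideal.one_eq_top, mul_one]
    exfalso
    apply hπ2
    have hIeq : I = 𝔭 ^ 2 := by rw [hE, hE1, ← Ideal.one_eq_top, mul_one]
    rw [← hIeq]
    exact Submodule.mem_sup_right (Ideal.mem_span_singleton_self π)

theorem smul_mem_smul_aux {𝔭 : Ideal A} {Y Y' : Submodule A (Fin r → K)} {s : A}
    (hsY : ∀ y ∈ Y', s • y ∈ Y) {w : Fin r → K} (hw : w ∈ 𝔭 • Y') : s • w ∈ 𝔭 • Y := by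
  refine Submodule.smul_induction_on hw ?_ ?_
  · intro a ha x hx
    rw [smul_comm]
    exact Submodule.smul_mem_smul ha (hsY x hx)
  · intro x y hx hy
    rw [smul_add]; exact Submodule.add_mem _ hx hy

theorem relCard_eq_of_smul {𝔭 : Ideal A} (hm : 𝔭.IsMaximal)
    {Y Y' : Submodule A (Fin r → K)} (hle : Y ≤ Y') {s : A} (hs : s ∉ 𝔭)
    (hsY : ∀ y ∈ Y', s • y ∈ Y) :
    relCard Y (𝔭 • Y) = relCard Y' (𝔭 • Y') := by
  obtain ⟨t, i, hi, hti⟩ := hm.exists_inv hs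
  set σ0 : ↥Y' →ₗ[A] ↥Y :=
    LinearMap.codRestrict Y (s • Y'.subtype) (fun c => hsY _ c.2) with hσ0
  set σ1 : ↥Y' →ₗ[A] (↥Y ⧸ Submodule.comap Y.subtype (𝔭 • Y)) :=
    (Submodule.comap Y.subtype (𝔭 • Y)).mkQ ∘ₗ σ0 with hσ1
  have hker : Submodule.comap Y'.subtype (𝔭 • Y') ≤ LinearMap.ker σ1 := by
    intro x hx
    rw [LinearMap.mem_ker, hσ1, LinearMap.comp_apply, Submodule.mkQ_apply,
      Submodule.Quotient.mk_eq_zero]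
    exact smul_mem_smul_aux hsY hx
  set σ := (Submodule.comap Y'.subtype (𝔭 • Y')).liftQ σ1 hker with hσ
  have hker2 : LinearMap.ker σ1 ≤ Submodule.comap Y'.subtype (𝔭 • Y') := by
    intro x hx
    rw [LinearMap.mem_ker, hσ1, LinearMap.comp_apply, Submodule.mkQ_apply,
      Submodule.Quotient.mk_eq_zero, Submodule.mem_comap] at hx
    have hx' : s • (x : Fin r → K) ∈ 𝔭 • Y := hx
    rw [Submodule.mem_comap]
    have hxeq : (x : Fin r → K) = i • (x : Fin r → K) + t • (s • (x : Fin r → K)) := by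
      rw [smul_smul, ← add_smul, add_comm, hti, one_smul]
    rw [Submodule.subtype_apply, hxeq]
    refine Submodule.add_mem _ (Submodule.smul_mem_smul hi x.2) ?_
    exact Submodule.smul_mem _ t (Submodule.smul_le.mpr
      (fun a ha z hz => Submodule.smul_mem_smul ha (hle hz)) hx')
  have hinj : Function.Injective σ := by
    rw [← LinearMap.ker_eq_bot, hσ, Submodule.ker_liftQ_eq_bot _ _ _ hker2]
  have hsurj : Function.Surjective σ := by
    intro q
    obtain ⟨y, rfl⟩ := Submodule.Quotient.mk_surjective _ q
    refine ⟨Submodule.Quotient.mk ⟨t • (y : Fin r → K), Y'.smul_mem t (hle y.2)⟩, ?_⟩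
    have happ : σ (Submodule.Quotient.mk ⟨t • (y : Fin r → K), Y'.smul_mem t (hle y.2)⟩)
        = Submodule.Quotient.mk (σ0 ⟨t • (y : Fin r → K), Y'.smul_mem t (hle y.2)⟩) := rfl
    rw [happ, Submodule.Quotient.eq]
    have hco : ((σ0 ⟨t • (y : Fin r → K), Y'.smul_mem t (hle y.2)⟩ - y : ↥Y) : Fin r → K)
        = -(i • (y : Fin r → K)) := by
      have : (σ0 ⟨t • (y : Fin r → K), Y'.smul_mem t (hle y.2)⟩ : Fin r → K)
          = s • t • (y : Fin r → K) := rfl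
      rw [Submodule.coe_sub, this, smul_smul, ← neg_one_smul (R := A), ← smul_assoc,
        smul_eq_mul]
      rw [show s * t = 1 - i by rw [← hti, mul_comm]; ring]
      module
    rw [Submodule.mem_comap, Submodule.subtype_apply, hco]
    exact Submodule.neg_mem _ (Submodule.smul_mem_smul hi y.2)
  have := Nat.card_congr (Equiv.ofBijective σ ⟨hinj, hsurj⟩)
  exact this.symm

theorem span_smul_singleton_le {𝔭 : Ideal A} {y : Fin r → K} {w : Fin r → K}
    (hw : w ∈ 𝔭 • Submodule.span A ({y} : Set (Fin r → K))) : ∃ e ∈ 𝔭, e • y = w := by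
  refine Submodule.smul_induction_on hw ?_ ?_
  · intro a ha x hx
    obtain ⟨c, rfl⟩ := Submodule.mem_span_singleton.mp hx
    exact ⟨a * c, Ideal.mul_mem_right c _ ha, by rw [mul_smul]⟩
  · rintro x y ⟨e1, he1, rfl⟩ ⟨e2, he2, rfl⟩
    exact ⟨e1 + e2, Ideal.add_mem _ he1 he2, by rw [add_smul]⟩

/-- If `𝔭 y ⊆ Y` and `y ∉ Y` then `(Y + Ay)/Y ≅ A/𝔭`. -/
theorem relCard_cyc1 {𝔭 : Ideal A} (hm : 𝔭.IsMaximal)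
    {Y : Submodule A (Fin r → K)} {y : Fin r → K} (hy : y ∉ Y)
    (h𝔭y : ∀ p ∈ 𝔭, p • y ∈ Y) :
    relCard (Y ⊔ Submodule.span A ({y} : Set (Fin r → K))) Y = Nat.card (A ⧸ 𝔭) := by
  set Y' := Y ⊔ Submodule.span A ({y} : Set (Fin r → K)) with hY'
  have hyY' : y ∈ Y' := Submodule.mem_sup_right (Submodule.mem_span_singleton_self y)
  set g : A →ₗ[A] (↥Y' ⧸ Submodule.comap Y'.subtype Y) :=
    (Submodule.comap Y'.subtype Y).mkQ ∘ₗ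
      LinearMap.codRestrict Y' (LinearMap.toSpanSingleton A _ y)
        (fun a => Y'.smul_mem a hyY') with hg
  have hgapp : ∀ a : A, g a = Submodule.Quotient.mk ⟨a • y, Y'.smul_mem a hyY'⟩ := fun a => rfl
  have hker : LinearMap.ker g = 𝔭 := by
    have hle : 𝔭 ≤ LinearMap.ker g := by
      intro p hp
      rw [LinearMap.mem_ker, hgapp, Submodule.Quotient.mk_eq_zero, Submodule.mem_comap]
      exact h𝔭y p hp
    refine (hm.eq_of_le (fun htop => ?_) hle).symm
    have h1 : (1 : A) ∈ LinearMap.ker g := htop ▸ Submodule.mem_top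
    rw [LinearMap.mem_ker, hgapp, Submodule.Quotient.mk_eq_zero, Submodule.mem_comap] at h1
    exact hy (by simpa using h1)
  have hsurj : Function.Surjective g := by
    intro q
    obtain ⟨z, rfl⟩ := Submodule.Quotient.mk_surjective _ q
    have hz : (z : Fin r → K) ∈ Y ⊔ Submodule.span A ({y} : Set (Fin r → K)) := z.2
    obtain ⟨u, hu, w, hw, huw⟩ := Submodule.mem_sup.mp hz
    obtain ⟨c, rfl⟩ := Submodule.mem_span_singleton.mp hw
    refine ⟨c, ?_⟩
    rw [hgapp, Submodule.Quotient.eq, Submodule.mem_comap]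
    have : ((⟨c • y, Y'.smul_mem c hyY'⟩ - z : ↥Y') : Fin r → K) = -u := by
      rw [Submodule.coe_sub, ← huw]; abel
    rw [Submodule.subtype_apply, this]
    exact Submodule.neg_mem _ hu
  have hequiv := LinearMap.quotKerEquivOfSurjective g hsurj
  rw [hker] at hequiv
  exact (Nat.card_congr hequiv.toEquiv).symm

/-- If `𝔭 y ⊆ Y` and `y ∉ Y` then `𝔭(Y + Ay)/(𝔭 Y) ≅ A/𝔭`. -/
theorem relCard_cyc2 {𝔭 : Ideal A} (h0 : 𝔭 ≠ ⊥) (hm : 𝔭.IsMaximal)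
    {Y : Submodule A (Fin r → K)} {y : Fin r → K} (hy : y ∉ Y)
    (h𝔭y : ∀ p ∈ 𝔭, p • y ∈ Y) :
    relCard (𝔭 • (Y ⊔ Submodule.span A ({y} : Set (Fin r → K)))) (𝔭 • Y)
      = Nat.card (A ⧸ 𝔭) := by
  obtain ⟨π, hπ𝔭, hπgen⟩ := exists_pi h0 hm
  set Y' := Y ⊔ Submodule.span A ({y} : Set (Fin r → K)) with hY'
  have hyY' : y ∈ Y' := Submodule.mem_sup_right (Submodule.mem_span_singleton_self y)
  have hπy : π • y ∈ 𝔭 • Y' := Submodule.smul_mem_smul hπ𝔭 hyY'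
  have hsq : ∀ t ∈ 𝔭 ^ 2, t • y ∈ 𝔭 • Y := by
    intro t ht
    rw [pow_two] at ht
    refine Submodule.mul_induction_on ht ?_ ?_
    · intro a ha b hb
      rw [mul_smul]
      exact Submodule.smul_mem_smul ha (h𝔭y b hb)
    · intro a b ha hb
      rw [add_smul]; exact Submodule.add_mem _ ha hb
  set g : A →ₗ[A] (↥(𝔭 • Y') ⧸ Submodule.comap (𝔭 • Y').subtype (𝔭 • Y)) :=
    (Submodule.comap (𝔭 • Y').subtype (𝔭 • Y)).mkQ ∘ₗ
      LinearMap.codRestrict (𝔭 • Y') (LinearMap.toSpanSingleton A _ (π • y))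
        (fun a => (𝔭 • Y').smul_mem a hπy) with hg
  have hgapp : ∀ a : A, g a
      = Submodule.Quotient.mk ⟨a • π • y, (𝔭 • Y').smul_mem a hπy⟩ := fun a => rfl
  have hker : LinearMap.ker g = 𝔭 := by
    have hle : 𝔭 ≤ LinearMap.ker g := by
      intro p hp
      rw [LinearMap.mem_ker, hgapp, Submodule.Quotient.mk_eq_zero, Submodule.mem_comap]
      have : p • π • y = π • p • y := smul_comm _ _ _
      rw [Submodule.subtype_apply]
      show p • π • y ∈ 𝔭 • Y
      rw [this]
      exact Submodule.smul_mem_smul hπ𝔭 (h𝔭y p hp)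
    refine (hm.eq_of_le (fun htop => ?_) hle).symm
    have h1 : (1 : A) ∈ LinearMap.ker g := htop ▸ Submodule.mem_top
    rw [LinearMap.mem_ker, hgapp, Submodule.Quotient.mk_eq_zero, Submodule.mem_comap] at h1
    have hπyY : π • y ∈ 𝔭 • Y := by simpa using h1
    -- derive contradiction : y ∈ Y
    refine hy (inv_trick h0 Y ?_)
    intro p hp
    obtain ⟨u, hu, v, hv, huv⟩ := Submodule.mem_sup.mp (hπgen hp)
    obtain ⟨c, rfl⟩ := Ideal.mem_span_singleton'.mp hv
    rw [← huv, add_smul]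
    refine Submodule.add_mem _ (hsq u hu) ?_
    rw [mul_smul]
    exact Submodule.smul_mem _ c hπyY
  have hsurj : Function.Surjective g := by
    intro q
    obtain ⟨z, rfl⟩ := Submodule.Quotient.mk_surjective _ q
    have hz : (z : Fin r → K) ∈ 𝔭 • Y ⊔ 𝔭 • Submodule.span A ({y} : Set (Fin r → K)) := by
      rw [← Submodule.smul_sup]; exact z.2
    obtain ⟨u, hu, w, hw, huw⟩ := Submodule.mem_sup.mp hz
    obtain ⟨e, he, rfl⟩ := span_smul_singleton_le hw
    obtain ⟨t, ht, v, hv, htv⟩ := Submodule.mem_sup.mp (hπgen he)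
    obtain ⟨c, rfl⟩ := Ideal.mem_span_singleton'.mp hv
    refine ⟨c, ?_⟩
    rw [hgapp, Submodule.Quotient.eq, Submodule.mem_comap, Submodule.subtype_apply]
    have hcoe : ((⟨c • π • y, (𝔭 • Y').smul_mem c hπy⟩ - z : ↥(𝔭 • Y')) : Fin r → K)
        = c • π • y - (u + e • y) := by rw [Submodule.coe_sub, huw]
    rw [hcoe, ← htv, add_smul, mul_smul]
    have : c • π • y - (u + (t • y + c • π • y)) = -u - t • y := by abel
    rw [this]
    exact Submodule.sub_mem _ (Submodule.neg_mem _ hu) (hsq t ht)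
  have hequiv := LinearMap.quotKerEquivOfSurjective g hsurj
  rw [hker] at hequiv
  exact (Nat.card_congr hequiv.toEquiv).symm


theorem finite_rel (hfin : ∀ I : Ideal A, I ≠ ⊥ → Finite (A ⧸ I))
    {P N : Submodule A (Fin r → K)} (hP : P.FG)
    (hc : ∃ c : A, c ≠ 0 ∧ ∀ x ∈ P, c • x ∈ N) :
    Finite (↥P ⧸ Submodule.comap P.subtype N) := by
  obtain ⟨c, hc0, hcs⟩ := hc
  exact finite_quot hfin P N hP c hc0 hcs

theorem main_count (hfin : ∀ I : Ideal A, I ≠ ⊥ → Finite (A ⧸ I))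
    {𝔭 : Ideal A} (h0 : 𝔭 ≠ ⊥) (hm : 𝔭.IsMaximal) :
    ∀ n : ℕ, ∀ Y Y' : Submodule A (Fin r → K), Y.FG → Y'.FG →
      Submodule.span K (Y : Set (Fin r → K)) = ⊤ → Y ≤ Y' → relCard Y' Y = n →
      relCard Y (𝔭 • Y) = relCard Y' (𝔭 • Y') := by
  intro n
  induction n using Nat.strong_induction_on with
  | _ n ih =>
  intro Y Y' hYfg hY'fg hYsp hle hn
  obtain ⟨a, ha0, haY⟩ := exists_ann hY'fg hYsp
  have hNfin : Finite (A ⧸ 𝔭) := hfin 𝔭 h0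
  have hNpos : 0 < Nat.card (A ⧸ 𝔭) := Nat.card_pos
  by_cases heq : Y' ≤ Y
  · rw [le_antisymm hle heq]
  -- a splitting principle
  have hsplit : ∀ Ymid : Submodule A (Fin r → K), Y ≤ Ymid → Ymid ≤ Y' →
      Ymid ≠ Y → Ymid ≠ Y' → Ymid.FG →
      relCard Y (𝔭 • Y) = relCard Y' (𝔭 • Y') := by
    intro Ymid h1 h2 hne1 hne2 hmidfg
    have hfin1 : Finite (↥Y' ⧸ Submodule.comap Y'.subtype Ymid) :=
      finite_rel hfin hY'fg ⟨a, ha0, fun x hx => h1 (haY x hx)⟩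
    have hfin2 : Finite (↥Ymid ⧸ Submodule.comap Ymid.subtype Y) :=
      finite_rel hfin hmidfg ⟨a, ha0, fun x hx => haY x (h2 hx)⟩
    have hmul : relCard Y' Y = relCard Y' Ymid * relCard Ymid Y :=
      relCard_mul Y' Ymid Y h1 h2
    have hk1pos : 0 < relCard Y' Ymid := relCard_pos
    have hk2pos : 0 < relCard Ymid Y := relCard_pos
    have hk1ne : relCard Y' Ymid ≠ 1 := fun h =>
      hne2 (le_antisymm h2 (le_of_relCard_eq_one h))
    have hk2ne : relCard Ymid Y ≠ 1 := fun h =>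
      hne1 (le_antisymm (le_of_relCard_eq_one h) h1)
    have hk1lt : relCard Y' Ymid < n := by
      rw [← hn, hmul]
      have h2 : 2 ≤ relCard Ymid Y := by omega
      have h3 := Nat.mul_le_mul_left (relCard Y' Ymid) h2
      omega
    have hk2lt : relCard Ymid Y < n := by
      rw [← hn, hmul]
      have h2 : 2 ≤ relCard Y' Ymid := by omega
      have h3 := Nat.mul_le_mul_right (relCard Ymid Y) h2
      omega
    have hmidsp : Submodule.span K (Ymid : Set (Fin r → K)) = ⊤ := by
      refine top_unique ?_
      rw [← hYsp]
      exact Submodule.span_mono h1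
    have e1 : relCard Y (𝔭 • Y) = relCard Ymid (𝔭 • Ymid) :=
      ih _ hk2lt Y Ymid hYfg hmidfg hYsp h1 rfl
    have e2 : relCard Ymid (𝔭 • Ymid) = relCard Y' (𝔭 • Y') :=
      ih _ hk1lt Ymid Y' hmidfg hY'fg hmidsp h2 rfl
    rw [e1, e2]
  obtain ⟨y, hyY', hyY⟩ := SetLike.exists_of_lt (lt_of_le_of_ne hle (fun h => heq h.ge))
  set Y1 := Y ⊔ Submodule.span A ({y} : Set (Fin r → K)) with hY1def
  have hY1le : Y1 ≤ Y' := sup_le hle (Submodule.span_le.mpr (by simpa using hyY'))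
  have hle1 : Y ≤ Y1 := le_sup_left
  have hY1fg : Y1.FG := fg_of_le hY'fg hY1le
  by_cases hY1 : Y' ≤ Y1
  swap
  · -- Y1 is strictly intermediate
    refine hsplit Y1 hle1 hY1le (fun h => hyY ?_) (fun h => hY1 h.ge) hY1fg
    rw [← h]
    exact Submodule.mem_sup_right (Submodule.mem_span_singleton_self y)
  have hY1eq : Y1 = Y' := le_antisymm hY1le hY1
  set J : Ideal A := Submodule.comap (LinearMap.toSpanSingleton A (Fin r → K) y) Y with hJdef
  have hJmem : ∀ b : A, b ∈ J ↔ b • y ∈ Y := fun b => Iff.rfl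
  by_cases hJ𝔭 : J ≤ 𝔭
  · by_cases hcore : ∀ p ∈ 𝔭, p • y ∈ Y
    · -- core case
      have h𝔭YY : 𝔭 • Y ≤ Y := Submodule.smul_le_right
      have h𝔭Y'Y' : 𝔭 • Y' ≤ Y' := Submodule.smul_le_right
      have h𝔭mono : 𝔭 • Y ≤ 𝔭 • Y' := Submodule.smul_mono le_rfl hle
      have e1 : relCard Y' (𝔭 • Y) = relCard Y' Y * relCard Y (𝔭 • Y) :=
        relCard_mul Y' Y (𝔭 • Y) h𝔭YY hle
      have e2 : relCard Y' (𝔭 • Y) = relCard Y' (𝔭 • Y') * relCard (𝔭 • Y') (𝔭 • Y) :=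
        relCard_mul Y' (𝔭 • Y') (𝔭 • Y) h𝔭mono h𝔭Y'Y'
      have e3 : relCard Y' Y = Nat.card (A ⧸ 𝔭) := by
        rw [← hY1eq, hY1def]
        exact relCard_cyc1 hm hyY hcore
      have e4 : relCard (𝔭 • Y') (𝔭 • Y) = Nat.card (A ⧸ 𝔭) := by
        rw [← hY1eq, hY1def]
        exact relCard_cyc2 h0 hm hyY hcore
      have := e1.symm.trans e2
      rw [e3, e4] at this
      rw [mul_comm] at this
      exact Nat.eq_of_mul_eq_mul_right hNpos this
    · -- split via Y2
      push_neg at hcore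
      obtain ⟨pp, hpp, hppy⟩ := hcore
      set Y2 := Y ⊔ 𝔭 • Submodule.span A ({y} : Set (Fin r → K)) with hY2def
      have h2le : Y2 ≤ Y' := by
        rw [← hY1eq, hY1def]
        exact sup_le le_sup_left (le_trans Submodule.smul_le_right le_sup_right)
      have hle2 : Y ≤ Y2 := le_sup_left
      have hY2fg : Y2.FG := fg_of_le hY'fg h2le
      refine hsplit Y2 hle2 h2le (fun h => hppy ?_) (fun h => ?_) hY2fg
      · rw [← h, hY2def]
        exact Submodule.mem_sup_right
          (Submodule.smul_mem_smul hpp (Submodule.mem_span_singleton_self y))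
      · -- y ∈ Y2 leads to 1 ∈ 𝔭
        have hyY2 : y ∈ Y2 := by
          rw [h]; exact hyY'
        rw [hY2def] at hyY2
        obtain ⟨u, hu, w, hw, huw⟩ := Submodule.mem_sup.mp hyY2
        obtain ⟨e, he, rfl⟩ := span_smul_singleton_le hw
        have hueq : u = y - e • y := eq_sub_iff_add_eq.mpr huw
        have h1e : (1 - e) • y ∈ Y := by
          rw [sub_smul, one_smul, ← hueq]; exact hu
        have h1eJ : (1 - e) ∈ 𝔭 := hJ𝔭 h1e
        have : (1 : A) ∈ 𝔭 := by
          have := Ideal.add_mem 𝔭 h1eJ he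
          simpa using this
        exact hm.ne_top ((Ideal.eq_top_iff_one 𝔭).mpr this)
  · -- J ⊄ 𝔭 : multiplication by s
    obtain ⟨s, hsJ, hs𝔭⟩ := SetLike.not_le_iff_exists.mp hJ𝔭
    have hsY' : ∀ z ∈ Y', s • z ∈ Y := by
      intro z hz
      rw [← hY1eq, hY1def] at hz
      obtain ⟨u, hu, w, hw, huw⟩ := Submodule.mem_sup.mp hz
      obtain ⟨c, rfl⟩ := Submodule.mem_span_singleton.mp hw
      rw [← huw, smul_add]
      refine Submodule.add_mem _ (Submodule.smul_mem _ s hu) ?_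
      rw [smul_comm]
      exact Submodule.smul_mem _ c ((hJmem s).mp hsJ)
    exact relCard_eq_of_smul hm hle hs𝔭 hsY'

theorem free_count {𝔭 : Ideal A} (v : Fin r → (Fin r → K))
    (hliA : LinearIndependent A v) :
    relCard (Submodule.span A (Set.range v)) (𝔭 • Submodule.span A (Set.range v))
      = Nat.card (A ⧸ 𝔭) ^ r := by
  classical
  set Y₀ := Submodule.span A (Set.range v) with hY₀def
  set θ' : (Fin r → A) →ₗ[A] (Fin r → K) := Fintype.linearCombination A v with hθ'def
  have hθ'app : ∀ x, θ' x = ∑ i, x i • v i := fun x => rfl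
  have hrange : LinearMap.range θ' = Y₀ := by rw [hθ'def, Fintype.range_linearCombination]
  have hinj' : Function.Injective θ' := by
    intro x x' hxx
    have hz : θ' (x - x') = 0 := by rw [map_sub, hxx, sub_self]
    have := Fintype.linearIndependent_iff.mp hliA (x - x') (by
      rw [← hθ'app]; exact hz)
    funext i
    have := this i
    simpa [sub_eq_zero] using this
  set θ : (Fin r → A) →ₗ[A] ↥Y₀ :=
    LinearMap.codRestrict Y₀ θ' (fun x => hrange ▸ LinearMap.mem_range_self θ' x) with hθdef
  have hθbij : Function.Bijective θ := by
    constructor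
    · intro x x' h
      exact hinj' (congrArg Subtype.val h)
    · rintro ⟨z, hz⟩
      rw [← hrange] at hz
      obtain ⟨x, hx⟩ := hz
      exact ⟨x, Subtype.ext hx⟩
  set E := LinearEquiv.ofBijective θ hθbij with hEdef
  set P : Submodule A (Fin r → A) := Submodule.pi Set.univ (fun _ => 𝔭) with hPdef
  have hsub : ∀ w ∈ 𝔭 • Y₀, ∃ x : Fin r → A, (∀ i, x i ∈ 𝔭) ∧ θ' x = w := by
    intro w hw
    refine Submodule.smul_induction_on hw ?_ ?_
    · intro a ha m hm
      rw [← hrange] at hm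
      obtain ⟨x₀, hx₀⟩ := hm
      exact ⟨a • x₀, fun i => Ideal.mul_mem_right _ _ ha, by rw [map_smul, hx₀]⟩
    · rintro w1 w2 ⟨x1, hx1, rfl⟩ ⟨x2, hx2, rfl⟩
      exact ⟨x1 + x2, fun i => Ideal.add_mem _ (hx1 i) (hx2 i), by rw [map_add]⟩
  have hmap : P.map (E : (Fin r → A) →ₗ[A] ↥Y₀) = Submodule.comap Y₀.subtype (𝔭 • Y₀) := by
    ext z
    constructor
    · rintro ⟨x, hx, rfl⟩
      refine Submodule.mem_comap.mpr ?_
      show (∑ i, x i • v i) ∈ 𝔭 • Y₀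
      exact Submodule.sum_mem _ fun i _ =>
        Submodule.smul_mem_smul (hx i (Set.mem_univ i))
          (Submodule.subset_span (Set.mem_range_self i))
    · intro hz
      rw [Submodule.mem_comap] at hz
      obtain ⟨x, hx𝔭, hxz⟩ := hsub _ hz
      refine ⟨x, fun i _ => hx𝔭 i, ?_⟩
      exact Subtype.ext hxz
  have hequiv := Submodule.Quotient.equiv P (Submodule.comap Y₀.subtype (𝔭 • Y₀)) E hmap
  have h1 : relCard Y₀ (𝔭 • Y₀) = Nat.card ((Fin r → A) ⧸ P) :=
    (Nat.card_congr hequiv.toEquiv).symm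
  have h2 : Nat.card ((Fin r → A) ⧸ P) = Nat.card (Fin r → A ⧸ 𝔭) :=
    Nat.card_congr (Submodule.quotientPi (fun _ : Fin r => 𝔭)).toEquiv
  rw [h1, h2, Nat.card_pi]
  simp

theorem lattice_count (hfin : ∀ I : Ideal A, I ≠ ⊥ → Finite (A ⧸ I))
    {𝔭 : Ideal A} (h0 : 𝔭 ≠ ⊥) (hm : 𝔭.IsMaximal)
    {Y : Submodule A (Fin r → K)} (hYfg : Y.FG)
    (hYsp : Submodule.span K (Y : Set (Fin r → K)) = ⊤) :
    relCard Y (𝔭 • Y) = Nat.card (A ⧸ 𝔭) ^ r := by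
  classical
  obtain ⟨b, hbY, hbsp, hbli⟩ := exists_linearIndependent K (Y : Set (Fin r → K))
  rw [hYsp] at hbsp
  have hbasis : Module.Basis b K (Fin r → K) :=
    Module.Basis.mk hbli (by rw [Subtype.range_coe, hbsp])
  haveI : Fintype b := IsNoetherian.fintypeBasisIndex hbasis
  have hcard : Fintype.card b = r := by
    have h1 := Module.finrank_eq_card_basis hbasis
    rw [Module.finrank_fin_fun K] at h1
    omega
  set e : Fin r ≃ b := (Fintype.equivFinOfCardEq hcard).symm with hedef
  set v : Fin r → (Fin r → K) := fun i => ((e i : b) : Fin r → K) with hvdef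
  have hvY : ∀ i, v i ∈ Y := fun i => hbY (e i).2
  have hvrange : Set.range v = b := by
    rw [hvdef]
    have : Set.range (fun i => ((e i : b) : Fin r → K))
        = Subtype.val '' Set.range e := by
      rw [← Set.range_comp]; rfl
    rw [this, Set.range_eq_univ.mpr e.surjective, Set.image_univ, Subtype.range_coe]
  have hliK : LinearIndependent K v := hbli.comp e e.injective
  have hliA : LinearIndependent A v :=
    LinearIndependent.restrict_scalars
      (fun x y h => IsFractionRing.injective A K (by simpa [Algebra.smul_def] using h)) hliK
  set Y₀ := Submodule.span A (Set.range v) with hY₀def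
  have hY₀le : Y₀ ≤ Y := Submodule.span_le.mpr (by
    intro x hx
    obtain ⟨i, rfl⟩ := hx
    exact hvY i)
  have hY₀fg : Y₀.FG := Submodule.fg_span (Set.finite_range v)
  have hY₀sp : Submodule.span K (Y₀ : Set (Fin r → K)) = ⊤ := by
    refine top_unique ?_
    rw [← hbsp, ← hvrange]
    exact Submodule.span_mono Submodule.subset_span
  have hmain := main_count hfin h0 hm (relCard Y Y₀) Y₀ Y hY₀fg hYfg hY₀sp hY₀le rfl
  rw [← hmain, hY₀def]
  exact free_count v hliA

end Stmt1Aux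

end

open scoped Classical

noncomputable section

variable {A : Type*} [CommRing A] [IsDomain A] [IsDedekindDomain A]
variable {K : Type*} [Field K] [Algebra A K] [IsFractionRing A K]
variable {r : ℕ}

/-- An `A`-lattice in `V = K^r`: a finitely generated `A`-submodule spanning `V` over `K`. -/
def IsLattice (Y : Submodule A (Fin r → K)) : Prop :=
  Y.FG ∧ Submodule.span K (Y : Set (Fin r → K)) = ⊤

/-- `ℒ(Y, 𝔭, i)`: the set of `A`-submodules `Z` with `𝔭Y ⊆ Z ⊆ Y` such that
`Z/𝔭Y` is an `i`-dimensional `A/𝔭`-vector space (expressed via its cardinality,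
which equals `#(A/𝔭)^i`). -/
def lset (𝔭 : Ideal A) (Y : Submodule A (Fin r → K)) (i : ℕ) :
    Set (Submodule A (Fin r → K)) :=
  {Z | 𝔭 • Y ≤ Z ∧ Z ≤ Y ∧
    Nat.card (Z ⧸ Submodule.comap Z.subtype (𝔭 • Y)) = Nat.card (A ⧸ 𝔭) ^ i}

/-- Let `Y ⊆ Y'` be `A`-lattices in `V` and `𝔭` a maximal ideal of `A`
such that the `𝔭`-torsion of `Y'/Y` is trivial. Then the canonical map
`Y/𝔭Y → Y'/𝔭Y'` is an isomorphism of `r`-dimensional `A/𝔭`-vector spaces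
(expressed by: `Y ⊔ 𝔭Y' = Y'`, `Y ⊓ 𝔭Y' = 𝔭Y`, and both quotients have
`#(A/𝔭)^r` elements), and for each `0 ≤ i < r` the map `Z ↦ Z + 𝔭Y'` is a
bijection from `ℒ(Y,𝔭,i)` onto `ℒ(Y',𝔭,i)` with inverse `Z' ↦ Z' ∩ Y`. -/
theorem statement1
    {p q : ℕ} (hp : p.Prime) (hq : ∃ n : ℕ, 0 < n ∧ q = p ^ n)
    {F : Type*} [Field F] [Fintype F] (hF : Fintype.card F = q) [Algebra F A]
    (hfin : ∀ I : Ideal A, I ≠ ⊥ → Finite (A ⧸ I))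
    (hr : 1 ≤ r)
    (Y Y' : Submodule A (Fin r → K)) (hY : IsLattice Y) (hY' : IsLattice Y')
    (hle : Y ≤ Y')
    (𝔭 : Ideal A) (h𝔭 : 𝔭.IsMaximal)
    (htor : ∀ y ∈ Y', (∀ a ∈ 𝔭, a • y ∈ Y) → y ∈ Y) :
    (Y ⊔ 𝔭 • Y' = Y') ∧ (Y ⊓ 𝔭 • Y' = 𝔭 • Y) ∧
    Nat.card (Y ⧸ Submodule.comap Y.subtype (𝔭 • Y)) = Nat.card (A ⧸ 𝔭) ^ r ∧
    Nat.card (Y' ⧸ Submodule.comap Y'.subtype (𝔭 • Y')) = Nat.card (A ⧸ 𝔭) ^ r ∧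
    ∀ i : ℕ, i < r →
      (∀ Z ∈ lset 𝔭 Y i, (Z ⊔ 𝔭 • Y') ∈ lset 𝔭 Y' i ∧ (Z ⊔ 𝔭 • Y') ⊓ Y = Z) ∧
      (∀ Z' ∈ lset 𝔭 Y' i, (Z' ⊓ Y) ∈ lset 𝔭 Y i ∧ (Z' ⊓ Y) ⊔ 𝔭 • Y' = Z') := by
  classical
  -- notation
  set N := Nat.card (A ⧸ 𝔭) with hNdef
  have hkey : (Y ⊔ 𝔭 • Y' = Y') ∧ (Y ⊓ 𝔭 • Y' = 𝔭 • Y) ∧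
      Stmt1Aux.relCard Y (𝔭 • Y) = N ^ r ∧ Stmt1Aux.relCard Y' (𝔭 • Y') = N ^ r := by
    by_cases h0 : 𝔭 = ⊥
    · -- A is a field
      subst h0
      have halg : Function.Surjective (algebraMap A K) := by
        intro k
        obtain ⟨⟨n, d⟩, hmk⟩ := IsLocalization.mk'_surjective (nonZeroDivisors A) k
        have hd0 : (d : A) ≠ 0 := nonZeroDivisors.coe_ne_zero d
        have hdunit : IsUnit (d : A) := by
          rw [← Ideal.span_singleton_eq_top]
          by_contra htop
          have := h𝔭.eq_of_le htop bot_le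
          exact hd0 (by
            have : (d : A) ∈ (⊥ : Ideal A) := by
              rw [this]; exact Ideal.mem_span_singleton_self _
            simpa using this)
        obtain ⟨u, hu⟩ := hdunit
        refine ⟨n * ↑u⁻¹, ?_⟩
        have hspec : k * algebraMap A K (d : A) = algebraMap A K n := by
          rw [← hmk]; exact IsLocalization.mk'_spec K n d
        have hdK : algebraMap A K (d : A) ≠ 0 := fun h =>
          hd0 (IsFractionRing.injective A K (by rw [h, map_zero]))
        have hcand : algebraMap A K (n * ↑u⁻¹) * algebraMap A K (d : A)
            = algebraMap A K n := by
          rw [← map_mul, mul_assoc, ← hu]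
          simp
        exact mul_right_cancel₀ hdK (hcand.trans hspec.symm)
      have htop : ∀ (W : Submodule A (Fin r → K)),
          Submodule.span K (W : Set (Fin r → K)) = ⊤ → W = ⊤ := by
        intro W hW
        refine top_unique ?_
        intro x hxtop
        clear hxtop
        have hx : x ∈ Submodule.span K (W : Set (Fin r → K)) := by rw [hW]; trivial
        induction hx using Submodule.span_induction with
        | mem x hxW => exact hxW
        | zero => exact W.zero_mem
        | add x y _ _ hx hy => exact W.add_mem hx hy
        | smul k x _ hx =>
            obtain ⟨a, rfl⟩ := halg k
            rw [algebraMap_smul]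
            exact W.smul_mem a hx
      have hYtop := htop Y hY.2
      have hY'top := htop Y' hY'.2
      have hbotsmul : ∀ W : Submodule A (Fin r → K), (⊥ : Ideal A) • W = ⊥ :=
        fun W => Submodule.bot_smul W
      have hcardW : ∀ W : Submodule A (Fin r → K), W = ⊤ →
          Stmt1Aux.relCard W ((⊥ : Ideal A) • W) = N ^ r := by
        intro W hW
        have hcomap : Submodule.comap W.subtype ((⊥ : Ideal A) • W) = ⊥ := by
          rw [hbotsmul, Submodule.comap_bot, Submodule.ker_subtype]
        have e1 : (↥W ⧸ Submodule.comap W.subtype ((⊥ : Ideal A) • W)) ≃ ↥W :=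
          (Submodule.quotEquivOfEqBot _ hcomap).toEquiv
        have e2 : ↥W ≃ (Fin r → K) :=
          ((LinearEquiv.ofEq W ⊤ hW).trans Submodule.topEquiv).toEquiv
        have e3 : (A ⧸ (⊥ : Ideal A)) ≃ A :=
          (Submodule.quotEquivOfEqBot _ rfl).toEquiv
        have e4 : A ≃ K := Equiv.ofBijective _ ⟨IsFractionRing.injective A K, halg⟩
        show Nat.card _ = N ^ r
        rw [Nat.card_congr (e1.trans e2), hNdef, Nat.card_congr (e3.trans e4), Nat.card_fun]
        simp
      refine ⟨?_, ?_, hcardW Y hYtop, hcardW Y' hY'top⟩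
      · rw [hbotsmul Y', sup_bot_eq, hYtop, hY'top]
      · rw [hbotsmul Y', hbotsmul Y, inf_bot_eq]
    · -- main case : 𝔭 ≠ ⊥
      have hNfin : Finite (A ⧸ 𝔭) := hfin 𝔭 h0
      have hNpos : 0 < N := Nat.card_pos
      have hcY : Stmt1Aux.relCard Y (𝔭 • Y) = N ^ r :=
        Stmt1Aux.lattice_count hfin h0 h𝔭 hY.1 hY.2
      have hcY' : Stmt1Aux.relCard Y' (𝔭 • Y') = N ^ r :=
        Stmt1Aux.lattice_count hfin h0 h𝔭 hY'.1 hY'.2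
      -- part (a)
      have ha : Y ⊔ 𝔭 • Y' = Y' := by
        refine le_antisymm (sup_le hle Submodule.smul_le_right) ?_
        set I : Ideal A := Y.colon Y' with hIdef
        have hI0 : I ≠ ⊥ := by
          obtain ⟨a, ha0, haY⟩ := Stmt1Aux.exists_ann hY'.1 hY.2
          intro hbot
          have : a ∈ I := Submodule.mem_colon.mpr haY
          rw [hbot] at this
          exact ha0 (by simpa using this)
        by_cases hI𝔭 : I ≤ 𝔭
        · exfalso
          obtain ⟨D, hD⟩ := Ideal.dvd_iff_le.mpr hI𝔭
          have hDI : ¬ D ≤ I := by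
            intro hDle
            have h1 : I = D := le_antisymm (hD.le.trans Ideal.mul_le_right) hDle
            have h2 : 𝔭 * I = 1 * I := by
              rw [one_mul]
              nth_rewrite 1 [h1]
              exact hD.symm
            have := mul_right_cancel₀ hI0 h2
            exact h𝔭.ne_top (by rw [← Ideal.one_eq_top, this])
          obtain ⟨c, hcD, hcI⟩ := SetLike.not_le_iff_exists.mp hDI
          apply hcI
          rw [hIdef, Submodule.mem_colon]
          intro y' hy'
          refine htor _ (Y'.smul_mem c hy') ?_
          intro p hp
          rw [smul_smul]
          have hpc : p * c ∈ I := by rw [hD]; exact Ideal.mul_mem_mul hp hcD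
          exact Submodule.mem_colon.mp hpc y' hy'
        · obtain ⟨s, hsI, hs𝔭⟩ := SetLike.not_le_iff_exists.mp hI𝔭
          obtain ⟨t, i, hi, hti⟩ := h𝔭.exists_inv hs𝔭
          intro y' hy'
          have hdec : y' = t • (s • y') + i • y' := by
            rw [smul_smul, ← add_smul, hti, one_smul]
          rw [hdec]
          refine Submodule.add_mem _ ?_ ?_
          · exact Submodule.mem_sup_left
              (Y.smul_mem t (Submodule.mem_colon.mp hsI y' hy'))
          · exact Submodule.mem_sup_right (Submodule.smul_mem_smul hi hy')
      -- part (b)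
      have hinfge : 𝔭 • Y ≤ Y ⊓ 𝔭 • Y' :=
        le_inf Submodule.smul_le_right (Submodule.smul_mono le_rfl hle)
      have hb : Y ⊓ 𝔭 • Y' = 𝔭 • Y := by
        have h1 := Stmt1Aux.relCard_sup Y (𝔭 • Y')
        rw [ha] at h1
        -- h1 : relCard Y' (𝔭 • Y') = Nat.card (Y ⧸ comap Y.subtype (Y ⊓ 𝔭 • Y'))
        have h2 : Stmt1Aux.relCard Y (Y ⊓ 𝔭 • Y') = N ^ r := by
          show Nat.card (↥Y ⧸ Submodule.comap Y.subtype (Y ⊓ 𝔭 • Y')) = N ^ r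
          rw [← h1]
          exact hcY' 
        have h3 : Stmt1Aux.relCard Y (𝔭 • Y)
            = Stmt1Aux.relCard Y (Y ⊓ 𝔭 • Y') * Stmt1Aux.relCard (Y ⊓ 𝔭 • Y') (𝔭 • Y) :=
          Stmt1Aux.relCard_mul Y (Y ⊓ 𝔭 • Y') (𝔭 • Y) hinfge inf_le_left
        rw [hcY, h2] at h3
        have h4 : Stmt1Aux.relCard (Y ⊓ 𝔭 • Y') (𝔭 • Y) = 1 := by
          have hNr : 0 < N ^ r := pow_pos hNpos r
          exact Nat.eq_of_mul_eq_mul_left hNr (by rw [← h3, mul_one])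
        exact le_antisymm (Stmt1Aux.le_of_relCard_eq_one h4) hinfge
      exact ⟨ha, hb, hcY, hcY'⟩
  obtain ⟨ha, hb, hcY, hcY'⟩ := hkey
  refine ⟨ha, hb, hcY, hcY', ?_⟩
  intro i _
  constructor
  · rintro Z ⟨hZ1, hZ2, hZ3⟩
    have hZ𝔭 : Z ⊓ 𝔭 • Y' = 𝔭 • Y := by
      calc Z ⊓ 𝔭 • Y' = Z ⊓ (Y ⊓ 𝔭 • Y') := by rw [← inf_assoc, inf_eq_left.mpr hZ2]
        _ = Z ⊓ (𝔭 • Y) := by rw [hb]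
        _ = 𝔭 • Y := inf_eq_right.mpr hZ1
    have hinf : (Z ⊔ 𝔭 • Y') ⊓ Y = Z := by
      rw [sup_inf_assoc_of_le _ hZ2, inf_comm (𝔭 • Y') Y, hb, sup_eq_left.mpr hZ1]
    refine ⟨⟨le_sup_right, sup_le (hZ2.trans hle) Submodule.smul_le_right, ?_⟩, hinf⟩
    have h1 := Stmt1Aux.relCard_sup Z (𝔭 • Y')
    rw [hZ𝔭] at h1
    exact h1.trans hZ3
  · rintro Z' ⟨hZ'1, hZ'2, hZ'3⟩
    have h𝔭Z' : 𝔭 • Y ≤ Z' := (Submodule.smul_mono le_rfl hle).trans hZ'1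
    have hsupid : (Z' ⊓ Y) ⊔ 𝔭 • Y' = Z' := by
      rw [inf_sup_assoc_of_le _ hZ'1, ha, inf_eq_left.mpr hZ'2]
    have hinfid : (Z' ⊓ Y) ⊓ (𝔭 • Y') = 𝔭 • Y := by
      rw [inf_assoc, inf_comm Y (𝔭 • Y')]
      -- Z' ⊓ (𝔭 • Y' ⊓ Y) = 𝔭 • Y
      rw [inf_comm (𝔭 • Y') Y, hb]
      exact inf_eq_right.mpr h𝔭Z'
    refine ⟨⟨le_inf h𝔭Z' Submodule.smul_le_right, inf_le_right, ?_⟩, hsupid⟩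
    have h1 := Stmt1Aux.relCard_sup (Z' ⊓ Y) (𝔭 • Y')
    rw [hsupid, hinfid] at h1
    -- h1 : relCard Z' (𝔭Y') = Nat.card ((Z'⊓Y) ⧸ comap _ (𝔭 • Y))
    rw [← h1]
    exact hZ'3
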